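/- Let $D, \hat D \in \mathcal{A}_T^2$ with canonical decompositions $D = D' + \sum_{i=1}^p \theta_{\tau_i}^i\mathbb{1}_{\{\tau_i \le \cdot\}}$ and $\hat D = \hat D' + \sum_{i=1}^p \hat\theta_{\tau_i}^i\mathbb{1}_{\{\tau_i \le \cdot\}}$, where $D', \hat D'$ are predictable. If $D - \hat D$ is non-decreasing, then $D' - \hat D'$ is non-decreasing and $\theta_{\tau_i}^i \ge \hat\theta_{\tau_i}^i$ a.s. on $\{\tau_i \le T\}$ for each $i \in \{1,\ldots,p\}$. -/

import Mathlib

open MeasureTheory Finset Function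

noncomputable section

variable {Ω : Type*}

def intdN (τ : Ω → ℝ) (H : ℝ → Ω → ℝ) (t : ℝ) (ω : Ω) : ℝ :=
  if τ ω ≤ t then H (τ ω) ω else 0

def intdM (τ : Ω → ℝ) (lam : ℝ → Ω → ℝ) (H : ℝ → Ω → ℝ) (t : ℝ) (ω : Ω) : ℝ :=
  intdN τ H t ω - ∫ s in Set.Ioc (0 : ℝ) t, H s ω * lam s ω

/-- The predictable σ-algebra on `ℝ × Ω`, generated by the stochastic intervals
`(a,b] × A` with `A ∈ ℱ_a`. -/
def predictableSigma {m : MeasurableSpace Ω} (ℱ : Filtration ℝ m) :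
    MeasurableSpace (ℝ × Ω) :=
  MeasurableSpace.generateFrom
    {S | ∃ a b : ℝ, ∃ A : Set Ω, MeasurableSet[ℱ a] A ∧ S = Set.Ioc a b ×ˢ A}

/-- A process is predictable if it is measurable with respect to the predictable σ-algebra. -/
def Predictable {m : MeasurableSpace Ω} (ℱ : Filtration ℝ m) (X : ℝ → Ω → ℝ) : Prop :=
  @Measurable _ _ (predictableSigma ℱ) _ fun q : ℝ × Ω => X q.1 q.2

/-- Membership in `𝒜²_T`: rcll adapted process of finite variation starting at `0`
with square-integrable total variation. -/
def InA2 {m : MeasurableSpace Ω} (P : Measure Ω) (ℱ : Filtration ℝ m) (T : ℝ)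
    (D : ℝ → Ω → ℝ) : Prop :=
  Adapted ℱ D ∧ (∀ ω, D 0 ω = 0) ∧
    (∀ ω, ∀ t ∈ Set.Ico (0 : ℝ) T,
      Filter.Tendsto (fun s => D s ω) (nhdsWithin t (Set.Ioi t)) (nhds (D t ω))) ∧
    (∀ ω, BoundedVariationOn (fun s => D s ω) (Set.Icc 0 T)) ∧
    Integrable (fun ω => (eVariationOn (fun s => D s ω) (Set.Icc 0 T)).toReal ^ 2) P

/-- Membership in `ℋ²_{λⁱ,T}`: `E[∫₀ᵀ U_t² λⁱ_t dt] < ∞`. -/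
def InH2lam {m : MeasurableSpace Ω} (P : Measure Ω) (lam : ℝ → Ω → ℝ) (T : ℝ)
    (U : ℝ → Ω → ℝ) : Prop :=
  Integrable (fun ω => ∫ t in Set.Ioc (0 : ℝ) T, (U t ω) ^ 2 * lam t ω) P

open Filter Topology in
/-- A function monotone on `[0,T]` has a left limit (equal to `sSup (g '' (0,x))`) at every
`x ∈ (0,T]`. -/
lemma monoOn_tendsto_left {g : ℝ → ℝ} {T x : ℝ} (hg : MonotoneOn g (Set.Icc 0 T))
    (hx0 : 0 < x) (hxT : x ≤ T) :
    Filter.Tendsto g (nhdsWithin x (Set.Iio x)) (nhds (sSup (g '' Set.Ioo 0 x))) := by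
  have hsub : Set.Ioo 0 x ⊆ Set.Icc 0 T := fun v hv => ⟨hv.1.le, hv.2.le.trans hxT⟩
  have hxmem : x ∈ Set.Icc (0 : ℝ) T := ⟨hx0.le, hxT⟩
  refine MonotoneOn.tendsto_nhdsWithin_Ioo_left ⟨x / 2, by positivity, by linarith⟩
    (hg.mono hsub) ?_
  exact ⟨g x, fun y ⟨v, hv, hvy⟩ => hvy ▸ hg (hsub hv) hxmem hv.2.le⟩

open Filter Topology in
/-- A function of bounded variation on `[0,T]` whose `leftLim` at `x ∈ (0,T]` equals its value
actually tends to its value from the left. -/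
lemma bv_tendsto_leftLim {T x : ℝ} {f : ℝ → ℝ} (hf : BoundedVariationOn f (Set.Icc 0 T))
    (hx0 : 0 < x) (hxT : x ≤ T) (hl : Function.leftLim f x = f x) :
    Filter.Tendsto f (nhdsWithin x (Set.Iio x)) (nhds (f x)) := by
  obtain ⟨pp, qq, hp, hq, hpq⟩ :=
    hf.locallyBoundedVariationOn.exists_monotoneOn_sub_monotoneOn
  have hptend := monoOn_tendsto_left hp hx0 hxT
  have hqtend := monoOn_tendsto_left hq hx0 hxT
  have h2 : Tendsto f (𝓝[<] x)
      (𝓝 (sSup (pp '' Set.Ioo 0 x) - sSup (qq '' Set.Ioo 0 x))) := by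
    rw [hpq]; exact hptend.sub hqtend
  have hne : 𝓝[<] x ≠ ⊥ := (nhdsLT_neBot x).ne'
  have := leftLim_eq_of_tendsto h2
  rw [hl] at this
  rwa [← this] at h2

open Filter Topology in
/-- Deterministic key lemma: if `G = F + ∑ᵢ cᵢ 1_{τᵢ ≤ ·}` on `[0,T]` is monotone there, the
`τᵢ` are positive and strictly increasing, and `F` is left-continuous at each `τᵢ ≤ T`, then `F`
is monotone on `[0,T]` and all the jumps `cᵢ` with `τᵢ ≤ T` are nonnegative. -/
lemma key_comparison {T : ℝ} {p : ℕ} (τ : Fin p → ℝ) (c : Fin p → ℝ)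
    (hτpos : ∀ i, 0 < τ i) (hτord : StrictMono τ)
    (G F : ℝ → ℝ)
    (hmono : MonotoneOn G (Set.Icc 0 T))
    (hGF : ∀ t ∈ Set.Icc (0 : ℝ) T, G t = F t + ∑ i, (if τ i ≤ t then c i else 0))
    (hFcont : ∀ i, τ i ≤ T →
      Filter.Tendsto F (nhdsWithin (τ i) (Set.Iio (τ i))) (nhds (F (τ i)))) :
    MonotoneOn F (Set.Icc 0 T) ∧ ∀ i, τ i ≤ T → 0 ≤ c i := by
  -- upper bound on the left limit of G
  have hub : ∀ i, τ i ≤ T → ∀ y ∈ G '' Set.Ioo 0 (τ i), y ≤ G (τ i) := by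
    rintro i hi y ⟨v, hv, rfl⟩
    exact hmono ⟨hv.1.le, hv.2.le.trans hi⟩ ⟨(hτpos i).le, hi⟩ hv.2.le
  have hbdd : ∀ i, τ i ≤ T → BddAbove (G '' Set.Ioo 0 (τ i)) :=
    fun i hi => ⟨G (τ i), fun y hy => hub i hi y hy⟩
  have hne : ∀ i : Fin p, (Set.Ioo (0 : ℝ) (τ i)).Nonempty :=
    fun i => ⟨τ i / 2, by have := hτpos i; constructor <;> [positivity; linarith]⟩
  -- the jump identity : cᵢ = G (τᵢ) - (left limit of G at τᵢ)
  have hci : ∀ i, τ i ≤ T → c i = G (τ i) - sSup (G '' Set.Ioo 0 (τ i)) := by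
    intro i hi
    set L := sSup (G '' Set.Ioo 0 (τ i)) with hL
    have htend : Tendsto G (𝓝[<] τ i) (𝓝 L) := monoOn_tendsto_left hmono (hτpos i) hi
    set K := ∑ j, (if j < i then c j else 0) with hK
    -- the step part is eventually constant equal to K to the left of τ i
    have hiff : ∀ᶠ s in 𝓝[<] τ i, ∀ j : Fin p, (τ j ≤ s ↔ j < i) := by
      rw [Filter.eventually_all]
      intro j
      rcases lt_or_ge j i with hj | hj
      · filter_upwards [Ioo_mem_nhdsLT (hτord hj)] with s hs
        simp [hj, hs.1.le]
      · filter_upwards [self_mem_nhdsWithin] with s hs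
        have : s < τ j := lt_of_lt_of_le hs (hτord.monotone hj)
        simp [not_le.mpr this, not_lt.mpr hj]
    have hJ : ∀ᶠ s in 𝓝[<] τ i, (∑ j, (if τ j ≤ s then c j else 0)) = K := by
      filter_upwards [hiff] with s hs
      exact Finset.sum_congr rfl fun j _ => by rw [if_congr (hs j) rfl rfl]
    have hGs : ∀ᶠ s in 𝓝[<] τ i,
        G s = F s + ∑ j, (if τ j ≤ s then c j else 0) := by
      filter_upwards [Ioo_mem_nhdsLT (hτpos i)] with s hs
      exact hGF s ⟨hs.1.le, hs.2.le.trans hi⟩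
    have hFtend : Tendsto F (𝓝[<] τ i) (𝓝 (L - K)) := by
      refine (htend.sub tendsto_const_nhds).congr' ?_
      filter_upwards [hGs, hJ] with s h1 h2
      rw [h1, h2]; ring
    have huniq : F (τ i) = L - K :=
      tendsto_nhds_unique (hFcont i hi) hFtend
    have hGτ := hGF (τ i) ⟨(hτpos i).le, hi⟩
    have hJτ : (∑ j, (if τ j ≤ τ i then c j else 0)) = c i + K := by
      have h1 : (∑ j, (if τ j ≤ τ i then c j else 0))
          = ∑ j, (if j ≤ i then c j else 0) :=
        Finset.sum_congr rfl fun j _ => by rw [if_congr hτord.le_iff_le rfl rfl]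
      have h2 : ∀ j : Fin p, (if j ≤ i then c j else 0)
          = (if j = i then c j else 0) + (if j < i then c j else 0) := by
        intro j
        rcases lt_trichotomy j i with h | h | h
        · simp [h, h.le, h.ne]
        · subst h; simp
        · simp [h.ne', not_le.mpr h, not_lt.mpr h.le]
      rw [h1, Finset.sum_congr rfl fun j _ => h2 j, Finset.sum_add_distrib,
        Finset.sum_ite_eq' Finset.univ i c]
      simp [hK]
    rw [hJτ, huniq] at hGτ
    linarith
  have hLle : ∀ i, τ i ≤ T → sSup (G '' Set.Ioo 0 (τ i)) ≤ G (τ i) :=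
    fun i hi => csSup_le ((hne i).image G) (hub i hi)
  -- the main summed-jumps estimate, by induction on the number of jumps in (s, t]
  have main : ∀ n : ℕ, ∀ s t : ℝ, 0 ≤ s → s ≤ t → t ≤ T →
      (Finset.univ.filter (fun j : Fin p => s < τ j ∧ τ j ≤ t)).card ≤ n →
      ∑ j ∈ Finset.univ.filter (fun j : Fin p => s < τ j ∧ τ j ≤ t), c j ≤ G t - G s := by
    intro n
    induction n with
    | zero =>
      intro s t hs hst htT hcard
      rw [Finset.card_eq_zero.mp (Nat.le_zero.mp hcard)]
      have := hmono ⟨hs, hst.trans htT⟩ ⟨hs.trans hst, htT⟩ hst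
      simpa using by linarith
    | succ n ih =>
      intro s t hs hst htT hcard
      set S := Finset.univ.filter (fun j : Fin p => s < τ j ∧ τ j ≤ t) with hSdef
      rcases S.eq_empty_or_nonempty with hS | hS
      · rw [hS]
        have := hmono ⟨hs, hst.trans htT⟩ ⟨hs.trans hst, htT⟩ hst
        simpa using by linarith
      · set i0 := S.max' hS with hi0def
        have hi0S : i0 ∈ S := S.max'_mem hS
        have hi0mem : s < τ i0 ∧ τ i0 ≤ t := by
          simpa [hSdef] using hi0S
        have hi0T : τ i0 ≤ T := hi0mem.2.trans htT
        -- pick u just to the left of τ i0, above s and all other jump times in (s,t]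
        have hev : ∀ᶠ u in 𝓝[<] τ i0,
            (s < u ∧ ∀ j ∈ S.erase i0, τ j < u) := by
          refine Eventually.and ?_ ?_
          · filter_upwards [Ioo_mem_nhdsLT hi0mem.1] with u hu
            exact hu.1
          · rw [eventually_all_finset]
            intro j hj
            have hjS := Finset.mem_of_mem_erase hj
            have hjne : j ≠ i0 := Finset.ne_of_mem_erase hj
            have hjlt : j < i0 := lt_of_le_of_ne (S.le_max' j hjS) hjne
            filter_upwards [Ioo_mem_nhdsLT (hτord hjlt)] with u hu
            exact hu.1
        obtain ⟨u, ⟨hsu, hju⟩, hulti0⟩ :=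
          (hev.and self_mem_nhdsWithin).exists
        have hu0 : 0 < u := lt_of_le_of_lt hs hsu
        have huT : u ≤ T := (hulti0.trans_le hi0T).le.trans le_rfl
        -- the jumps in (s,u] are exactly S.erase i0
        have hfu : Finset.univ.filter (fun j : Fin p => s < τ j ∧ τ j ≤ u)
            = S.erase i0 := by
          ext j
          simp only [Finset.mem_filter, Finset.mem_univ, true_and, Finset.mem_erase, hSdef]
          constructor
          · rintro ⟨h1, h2⟩
            have hjlt : τ j < τ i0 := lt_of_le_of_lt h2 hulti0
            exact ⟨fun hji => absurd hjlt (by rw [hji]; exact lt_irrefl _),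
              h1, h2.trans (hulti0.le.trans hi0mem.2)⟩
          · rintro ⟨hne', h1, h2⟩
            have hjmem : j ∈ S.erase i0 := by
              simp only [hSdef, Finset.mem_erase, Finset.mem_filter, Finset.mem_univ, true_and]
              exact ⟨hne', h1, h2⟩
            exact ⟨h1, (hju j hjmem).le⟩
        have hcard' : (S.erase i0).card ≤ n := by
          have h1 := Finset.card_erase_of_mem hi0S
          omega
        have hih : ∑ j ∈ S.erase i0, c j ≤ G u - G s := by
          have := ih s u hs hsu.le huT (by rw [hfu] at *; exact hcard')
          rwa [hfu] at this
        have hc0 : c i0 = G (τ i0) - sSup (G '' Set.Ioo 0 (τ i0)) := hci i0 hi0T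
        have hGu : G u ≤ sSup (G '' Set.Ioo 0 (τ i0)) :=
          le_csSup (hbdd i0 hi0T) ⟨u, ⟨hu0, hulti0⟩, rfl⟩
        have hGt : G (τ i0) ≤ G t :=
          hmono ⟨(hτpos i0).le, hi0T⟩ ⟨hs.trans hst, htT⟩ hi0mem.2
        have hsplit : ∑ j ∈ S, c j = c i0 + ∑ j ∈ S.erase i0, c j :=
          (Finset.add_sum_erase S c hi0S).symm
        rw [hsplit]
        linarith
  refine ⟨?_, fun i hi => by
    have := hLle i hi
    rw [hci i hi]; linarith⟩
  intro s hsmem t htmem hst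
  have hFs : F s = G s - ∑ j, (if τ j ≤ s then c j else 0) := by
    have := hGF s hsmem; linarith
  have hFt : F t = G t - ∑ j, (if τ j ≤ t then c j else 0) := by
    have := hGF t htmem; linarith
  have hdiff : (∑ j, (if τ j ≤ t then c j else 0)) - (∑ j, (if τ j ≤ s then c j else 0))
      = ∑ j ∈ Finset.univ.filter (fun j : Fin p => s < τ j ∧ τ j ≤ t), c j := by
    rw [← Finset.sum_sub_distrib, Finset.sum_filter]
    refine Finset.sum_congr rfl fun j _ => ?_
    rcases le_or_gt (τ j) s with h | h
    · simp [h, h.trans hst, not_lt.mpr h]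
    · rcases le_or_gt (τ j) t with h' | h'
      · simp [h', not_le.mpr h, h]
      · simp [not_le.mpr h', not_le.mpr (lt_of_le_of_lt hst h')]
  have hmain := main (Finset.univ.filter (fun j : Fin p => s < τ j ∧ τ j ≤ t)).card
    s t hsmem.1 hst htmem.2 le_rfl
  rw [hFs, hFt]
  linarith

/-- If `D, D̂ ∈ 𝒜²_T` have canonical decompositions `D = D' + ∑ᵢ θⁱ_{τᵢ} 1_{τᵢ ≤ ·}` and
`D̂ = D̂' + ∑ᵢ θ̂ⁱ_{τᵢ} 1_{τᵢ ≤ ·}` with `D', D̂'` predictable (hence, the default times being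
totally inaccessible, continuous at the `τᵢ`), and if `D - D̂` is non-decreasing, then
`D' - D̂'` is non-decreasing and `θⁱ_{τᵢ} ≥ θ̂ⁱ_{τᵢ}` a.s. on `{τᵢ ≤ T}` for each `i`. -/
theorem nondecreasing_decompositions_comparison
    {m : MeasurableSpace Ω} (P : Measure Ω) [IsProbabilityMeasure P]
    (ℱ : Filtration ℝ m) (T : ℝ) (hT : 0 < T) (p : ℕ)
    (τ : Fin p → Ω → ℝ) (lam : Fin p → ℝ → Ω → ℝ)
    (hτpos : ∀ᵐ ω ∂P, ∀ i, 0 < τ i ω)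
    (hτord : ∀ᵐ ω ∂P, StrictMono fun i => τ i ω)
    (D Dh D' Dh' : ℝ → Ω → ℝ) (θ θh : Fin p → ℝ → Ω → ℝ)
    (hD : InA2 P ℱ T D) (hDh : InA2 P ℱ T Dh)
    (hD' : Predictable ℱ D' ∧ InA2 P ℱ T D')
    (hDh' : Predictable ℱ Dh' ∧ InA2 P ℱ T Dh')
    (hθ : ∀ i, InH2lam P (lam i) T (θ i))
    (hθh : ∀ i, InH2lam P (lam i) T (θh i))
    -- the canonical decompositions
    (hdecD : ∀ᵐ ω ∂P, ∀ t ∈ Set.Icc (0 : ℝ) T,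
      D t ω = D' t ω + ∑ i, intdN (τ i) (θ i) t ω)
    (hdecDh : ∀ᵐ ω ∂P, ∀ t ∈ Set.Icc (0 : ℝ) T,
      Dh t ω = Dh' t ω + ∑ i, intdN (τ i) (θh i) t ω)
    -- rcll predictable processes do not jump at the totally inaccessible times τᵢ
    (hD'cont : ∀ᵐ ω ∂P, ∀ i, τ i ω ≤ T →
      leftLim (fun s => D' s ω) (τ i ω) = D' (τ i ω) ω)
    (hDh'cont : ∀ᵐ ω ∂P, ∀ i, τ i ω ≤ T →
      leftLim (fun s => Dh' s ω) (τ i ω) = Dh' (τ i ω) ω)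
    -- D - D̂ is non-decreasing
    (hmono : ∀ᵐ ω ∂P, MonotoneOn (fun t => D t ω - Dh t ω) (Set.Icc 0 T)) :
    (∀ᵐ ω ∂P, MonotoneOn (fun t => D' t ω - Dh' t ω) (Set.Icc 0 T)) ∧
    (∀ i, ∀ᵐ ω ∂P, τ i ω ≤ T → θh i (τ i ω) ω ≤ θ i (τ i ω) ω) := by
  have H : ∀ᵐ ω ∂P, MonotoneOn (fun t => D' t ω - Dh' t ω) (Set.Icc 0 T) ∧
      ∀ i, τ i ω ≤ T → θh i (τ i ω) ω ≤ θ i (τ i ω) ω := by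
    filter_upwards [hτpos, hτord, hdecD, hdecDh, hD'cont, hDh'cont, hmono] with
      ω h1 h2 h3 h4 h5 h6 h7
    set G : ℝ → ℝ := fun t => D t ω - Dh t ω with hGdef
    set F : ℝ → ℝ := fun t => D' t ω - Dh' t ω with hFdef
    set c : Fin p → ℝ := fun i => θ i (τ i ω) ω - θh i (τ i ω) ω with hcdef
    have hGF : ∀ t ∈ Set.Icc (0 : ℝ) T,
        G t = F t + ∑ i, (if τ i ω ≤ t then c i else 0) := by
      intro t ht
      have e1 := h3 t ht
      have e2 := h4 t ht
      have e3 : ∀ i : Fin p, intdN (τ i) (θ i) t ω - intdN (τ i) (θh i) t ω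
          = (if τ i ω ≤ t then c i else 0) := by
        intro i
        simp only [intdN, hcdef]
        split <;> simp
      calc G t = (D' t ω + ∑ i, intdN (τ i) (θ i) t ω)
            - (Dh' t ω + ∑ i, intdN (τ i) (θh i) t ω) := by rw [hGdef]; dsimp only; rw [e1, e2]
        _ = F t + ∑ i, (intdN (τ i) (θ i) t ω - intdN (τ i) (θh i) t ω) := by
            rw [Finset.sum_sub_distrib]; simp only [hFdef]; ring
        _ = F t + ∑ i, (if τ i ω ≤ t then c i else 0) := by
            rw [Finset.sum_congr rfl fun i _ => e3 i]
    have hFcont : ∀ i, τ i ω ≤ T →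
        Filter.Tendsto F (nhdsWithin (τ i ω) (Set.Iio (τ i ω))) (nhds (F (τ i ω))) := by
      intro i hi
      have hp := bv_tendsto_leftLim (hD'.2.2.2.2.1 ω) (h1 i) hi (h5 i hi)
      have hq := bv_tendsto_leftLim (hDh'.2.2.2.2.1 ω) (h1 i) hi (h6 i hi)
      exact hp.sub hq
    obtain ⟨hm, hc⟩ := key_comparison (fun i => τ i ω) c h1 h2 G F h7 hGF hFcont
    exact ⟨hm, fun i hi => by have := hc i hi; simp only [hcdef] at this; linarith⟩
  exact ⟨H.mono fun ω h => h.1, fun i => H.mono fun ω h hi => h.2 i hi⟩
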